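/- Any doubly substochastic nonnegative m×m matrix X (all row sums and column sums at most 1) can be written as a convex combination of subpermutation matrices: X = Σᵢ αᵢ Mᵢ with αᵢ ≥ 0, Σᵢ αᵢ = 1, and each Mᵢ a 0-1 matrix with at most one 1 per row and column. -/

import Mathlib

open Finset Matrix

private lemma permMatrix_apply' {n : Type*} [Fintype n] [DecidableEq n]
    (σ : Equiv.Perm n) (i j : n) :
    σ.permMatrix ℝ i j = if σ i = j then 1 else 0 := by
  simp [Equiv.Perm.permMatrix, PEquiv.toMatrix, Equiv.toPEquiv_apply, eq_comm]

/-- Birkhoff–von Neumann decomposition for doubly substochastic matrices: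
any nonnegative m×m matrix with all row and column sums at most 1 is a
convex combination of subpermutation (0-1, row/column sums ≤ 1) matrices. -/
theorem stmt_2 (m : ℕ) (X : Matrix (Fin m) (Fin m) ℝ)
    (hnn : ∀ i j, 0 ≤ X i j)
    (hrow : ∀ i, ∑ j, X i j ≤ 1)
    (hcol : ∀ j, ∑ i, X i j ≤ 1) :
    ∃ (n : ℕ) (α : Fin n → ℝ) (M : Fin n → Matrix (Fin m) (Fin m) ℝ),
      (∀ k, 0 ≤ α k) ∧ (∑ k, α k = 1) ∧
      (∀ k i j, M k i j = 0 ∨ M k i j = 1) ∧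
      (∀ k i, ∑ j, M k i j ≤ 1) ∧
      (∀ k j, ∑ i, M k i j ≤ 1) ∧
      X = ∑ k, α k • M k := by
  classical
  -- Extend X to a doubly stochastic matrix Y on Fin m ⊕ Fin m
  set Y : Matrix (Fin m ⊕ Fin m) (Fin m ⊕ Fin m) ℝ :=
    fromBlocks X (diagonal fun i => 1 - ∑ j, X i j)
      (diagonal fun j => 1 - ∑ i, X i j) Xᵀ with hYdef
  have hYmem : Y ∈ doublyStochastic ℝ (Fin m ⊕ Fin m) := by
    rw [mem_doublyStochastic_iff_sum]
    refine ⟨?_, ?_, ?_⟩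
    · rintro (i | i) (j | j)
      · exact hnn i j
      · simp only [hYdef, fromBlocks_apply₁₂, diagonal_apply]
        split
        · linarith [hrow i]
        · exact le_refl 0
      · simp only [hYdef, fromBlocks_apply₂₁, diagonal_apply]
        split
        · next h => subst h; linarith [hcol i]
        · exact le_refl 0
      · exact hnn j i
    · rintro (i | i) <;>
        simp [hYdef, Fintype.sum_sum_type, diagonal_apply, Finset.sum_ite_eq',
          Matrix.transpose_apply]
    · rintro (j | j) <;>
        simp [hYdef, Fintype.sum_sum_type, diagonal_apply, Finset.sum_ite_eq,
          Matrix.transpose_apply]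
  obtain ⟨w, hw0, hw1, hwY⟩ := exists_eq_sum_perm_of_mem_doublyStochastic hYmem
  set N := Fintype.card (Equiv.Perm (Fin m ⊕ Fin m)) with hN
  obtain e := (Fintype.equivFin (Equiv.Perm (Fin m ⊕ Fin m))).symm
  refine ⟨N, fun k => w (e k), fun k i j => if e k (Sum.inl i) = Sum.inl j then 1 else 0,
    fun k => hw0 _, ?_, ?_, ?_, ?_, ?_⟩
  · rw [← hw1]; exact (Fintype.sum_equiv e _ _ (fun k => rfl))
  · intro k i j
    by_cases h : e k (Sum.inl i) = Sum.inl j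
    · right; simp [h]
    · left; simp [h]
  · intro k i
    rcases h : e k (Sum.inl i) with j' | j'
    · rw [Finset.sum_eq_single j']
      · simp [h]
      · intro b _ hb
        simp only [h, Sum.inl.injEq]
        exact if_neg (fun hc => hb hc.symm)
      · simp
    · have hz : ∀ j : Fin m, (if e k (Sum.inl i) = Sum.inl j then (1:ℝ) else 0) = 0 := by
        intro j; simp [h]
      rw [Finset.sum_congr rfl (fun j _ => hz j)]
      simp
  · intro k j
    rcases h : (e k).symm (Sum.inl j) with i' | i'
    · rw [Finset.sum_eq_single i']
      · have : e k (Sum.inl i') = Sum.inl j := by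
          rw [← h, Equiv.apply_symm_apply]
        simp [this]
      · intro b _ hb
        have hne : e k (Sum.inl b) ≠ Sum.inl j := by
          intro hc
          have := congrArg (e k).symm hc
          rw [Equiv.symm_apply_apply, h] at this
          exact hb (by simpa using this)
        simp [hne]
      · simp
    · have hz : ∀ i : Fin m, (if e k (Sum.inl i) = Sum.inl j then (1:ℝ) else 0) = 0 := by
        intro i
        have hne : e k (Sum.inl i) ≠ Sum.inl j := by
          intro hc
          have := congrArg (e k).symm hc
          rw [Equiv.symm_apply_apply, h] at this
          exact Sum.inl_ne_inr this
        simp [hne]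
      rw [Finset.sum_congr rfl (fun i _ => hz i)]
      simp
  · funext i j
    have hx : X i j = Y (Sum.inl i) (Sum.inl j) := rfl
    rw [hx, ← hwY]
    simp only [Finset.sum_apply, Matrix.sum_apply, Matrix.smul_apply, smul_eq_mul]
    exact Fintype.sum_equiv e.symm _ _ (fun σ => by simp [permMatrix_apply', Equiv.toPEquiv_apply]; show _ = w σ * _; split_ifs <;> simp_all)
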